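/- Let μ be a Borel probability measure on ℝⁿ and let k be a positive integer such that ∫‖x‖ᵏ dμ(x) < ∞. Let ν be a rotational symmetrization of μ. Then ∫∫ ⟨x,y⟩ᵏ dμ(x)dμ(y) ≥ ∫∫ ⟨x,y⟩ᵏ dν(x)dν(y). -/

import Mathlib

open MeasureTheory
open scoped RealInnerProductSpace

namespace RotSymAux

variable {n k : ℕ}

lemma abs_coord_le (x : EuclideanSpace ℝ (Fin n)) (i : Fin n) : |x i| ≤ ‖x‖ := by
  rw [EuclideanSpace.norm_eq, ← Real.sqrt_sq (abs_nonneg (x i))]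
  apply Real.sqrt_le_sqrt
  rw [← Real.norm_eq_abs]
  exact Finset.single_le_sum (f := fun j => ‖x j‖ ^ 2) (fun j _ => sq_nonneg _)
    (Finset.mem_univ i)

lemma continuous_coordProd (f : Fin k → Fin n) :
    Continuous (fun x : EuclideanSpace ℝ (Fin n) => ∏ j, x (f j)) :=
  continuous_finset_prod _ fun j _ => (EuclideanSpace.proj (f j)).continuous

lemma integrable_coordProd (μ : Measure (EuclideanSpace ℝ (Fin n)))
    (hmom : Integrable (fun x => ‖x‖ ^ k) μ) (f : Fin k → Fin n) :
    Integrable (fun x : EuclideanSpace ℝ (Fin n) => ∏ j, x (f j)) μ := by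
  refine hmom.mono ((continuous_coordProd f).aestronglyMeasurable) ?_
  filter_upwards with x
  rw [Real.norm_eq_abs, Finset.abs_prod, Real.norm_eq_abs,
    abs_of_nonneg (pow_nonneg (norm_nonneg x) k)]
  calc ∏ j, |x (f j)| ≤ ∏ _j : Fin k, ‖x‖ :=
        Finset.prod_le_prod (fun j _ => abs_nonneg _) (fun j _ => abs_coord_le x (f j))
    _ = ‖x‖ ^ k := by rw [Finset.prod_const, Finset.card_univ, Fintype.card_fin]

lemma inner_pow_eq_sum (x y : EuclideanSpace ℝ (Fin n)) :
    ⟪x, y⟫ ^ k = ∑ f : Fin k → Fin n, (∏ j, x (f j)) * (∏ j, y (f j)) := by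
  rw [PiLp.inner_apply]
  simp only [RCLike.inner_apply, conj_trivial]
  rw [Fintype.sum_pow]
  exact Finset.sum_congr rfl fun f _ => by
    rw [← Finset.prod_mul_distrib]; exact Finset.prod_congr rfl fun i _ => mul_comm _ _

lemma energy_eq_sum (σ τ : Measure (EuclideanSpace ℝ (Fin n)))
    [IsProbabilityMeasure σ] [IsProbabilityMeasure τ]
    (hσ : Integrable (fun x => ‖x‖ ^ k) σ) (hτ : Integrable (fun x => ‖x‖ ^ k) τ) :
    ∫ x, ∫ y, ⟪x, y⟫ ^ k ∂τ ∂σ =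
      ∑ f : Fin k → Fin n, (∫ x, ∏ j, x (f j) ∂σ) * (∫ y, ∏ j, y (f j) ∂τ) := by
  have hin : ∀ x : EuclideanSpace ℝ (Fin n),
      ∫ y, ⟪x, y⟫ ^ k ∂τ = ∑ f : Fin k → Fin n,
        (∏ j, x (f j)) * ∫ y, ∏ j, y (f j) ∂τ := by
    intro x
    simp_rw [inner_pow_eq_sum]
    rw [integral_finset_sum _ fun f _ => (integrable_coordProd τ hτ f).const_mul _]
    exact Finset.sum_congr rfl fun f _ => integral_const_mul _ _
  simp_rw [hin]
  rw [integral_finset_sum _ fun f _ => (integrable_coordProd σ hσ f).mul_const _]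
  exact Finset.sum_congr rfl fun f _ => integral_mul_const _ _

lemma radial_int (hk : 0 < k) (ν : Measure (EuclideanSpace ℝ (Fin n)))
    [IsProbabilityMeasure ν]
    (hrot : ∀ Q : EuclideanSpace ℝ (Fin n) ≃ₗᵢ[ℝ] EuclideanSpace ℝ (Fin n),
      Measure.map Q ν = ν)
    (e : EuclideanSpace ℝ (Fin n)) (he : ‖e‖ = 1) (x : EuclideanSpace ℝ (Fin n)) :
    ∫ y, ⟪x, y⟫ ^ k ∂ν = ‖x‖ ^ k * ∫ y, ⟪e, y⟫ ^ k ∂ν := by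
  rcases eq_or_ne x 0 with rfl | hx
  · simp [zero_pow hk.ne', norm_zero]
  · set u : EuclideanSpace ℝ (Fin n) := ‖x‖⁻¹ • x with hu_def
    have hnu : ‖u‖ = 1 := norm_smul_inv_norm hx
    have hvw : ‖e‖ = ‖u‖ := by rw [he, hnu]
    set Q := Submodule.reflection (ℝ ∙ (e - u))ᗮ with hQdef
    have hQe : Q e = u := Submodule.reflection_sub hvw
    have hQs : Q (‖x‖ • e) = x := by
      rw [Q.map_smul, hQe, hu_def, smul_smul,
        mul_inv_cancel₀ (norm_ne_zero_iff.mpr hx), one_smul]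
    have hcont : Continuous (fun y : EuclideanSpace ℝ (Fin n) => ⟪x, y⟫ ^ k) :=
      (continuous_const.inner continuous_id).pow k
    calc ∫ y, ⟪x, y⟫ ^ k ∂ν = ∫ y, ⟪x, Q y⟫ ^ k ∂ν := by
          conv_lhs => rw [← hrot Q]
          exact integral_map Q.continuous.measurable.aemeasurable
            (hcont.aestronglyMeasurable.mono_measure le_rfl |>.mono_ac
              (Measure.AbsolutelyContinuous.refl _)) |>.trans rfl
      _ = ∫ y, (‖x‖ * ⟪e, y⟫) ^ k ∂ν := by
          have hinner : ∀ y, ⟪x, Q y⟫ = ‖x‖ * ⟪e, y⟫ := fun y => by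
            conv_lhs => rw [← hQs]
            rw [Q.inner_map_map, real_inner_smul_left]
          simp_rw [hinner]
      _ = ‖x‖ ^ k * ∫ y, ⟪e, y⟫ ^ k ∂ν := by
          simp_rw [mul_pow]; exact integral_const_mul _ _

end RotSymAux

/-- The rotational symmetrization of a measure minimizes the `k`-th inner product
energy among measures with the given radial distribution. -/
theorem energy_ge_rotational_symmetrization (n : ℕ)
    (μ ν : Measure (EuclideanSpace ℝ (Fin n)))
    [IsProbabilityMeasure μ] [IsProbabilityMeasure ν]
    (k : ℕ) (hk : 0 < k)
    (hmom : Integrable (fun x => ‖x‖ ^ k) μ)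
    (hrot : ∀ Q : EuclideanSpace ℝ (Fin n) ≃ₗᵢ[ℝ] EuclideanSpace ℝ (Fin n),
      Measure.map Q ν = ν)
    (hrad : Measure.map (fun x => ‖x‖) μ = Measure.map (fun x => ‖x‖) ν) :
    (∫ x, ∫ y, ⟪x, y⟫ ^ k ∂μ ∂μ) ≥ ∫ x, ∫ y, ⟪x, y⟫ ^ k ∂ν ∂ν := by
  obtain rfl | hn := Nat.eq_zero_or_pos n
  · -- trivial case `n = 0`: all inner products vanish
    have hz : ∀ x y : EuclideanSpace ℝ (Fin 0), ⟪x, y⟫ ^ k = (0 : ℝ) := fun x y => by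
      rw [Subsingleton.elim x 0, inner_zero_left, zero_pow hk.ne']
    simp_rw [hz, integral_zero]
    exact le_refl _
  -- transfer moment integrability to `ν`
  have hpowm : AEStronglyMeasurable (fun t : ℝ => t ^ k)
      (Measure.map (fun x : EuclideanSpace ℝ (Fin n) => ‖x‖) μ) :=
    (measurable_id.pow_const k).aestronglyMeasurable
  have hpowm' : AEStronglyMeasurable (fun t : ℝ => t ^ k)
      (Measure.map (fun x : EuclideanSpace ℝ (Fin n) => ‖x‖) ν) :=
    (measurable_id.pow_const k).aestronglyMeasurable
  have hmν : Integrable (fun x => ‖x‖ ^ k) ν := by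
    have h1 : Integrable (fun t : ℝ => t ^ k)
        (Measure.map (fun x : EuclideanSpace ℝ (Fin n) => ‖x‖) μ) :=
      (integrable_map_measure hpowm measurable_norm.aemeasurable).mpr hmom
    rw [hrad] at h1
    exact (integrable_map_measure hpowm' measurable_norm.aemeasurable).mp h1
  -- equal radial moments
  have hrade : ∫ x, ‖x‖ ^ k ∂μ = ∫ x, ‖x‖ ^ k ∂ν := by
    have h1 : ∫ x, ‖x‖ ^ k ∂μ =
        ∫ t, t ^ k ∂(Measure.map (fun x : EuclideanSpace ℝ (Fin n) => ‖x‖) μ) :=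
      (integral_map measurable_norm.aemeasurable hpowm).symm
    have h2 : ∫ x, ‖x‖ ^ k ∂ν =
        ∫ t, t ^ k ∂(Measure.map (fun x : EuclideanSpace ℝ (Fin n) => ‖x‖) ν) :=
      (integral_map measurable_norm.aemeasurable hpowm').symm
    rw [h1, h2, hrad]
  -- a unit vector
  set e : EuclideanSpace ℝ (Fin n) := EuclideanSpace.single ⟨0, hn⟩ (1 : ℝ) with he_def
  have he : ‖e‖ = 1 := by rw [he_def, EuclideanSpace.norm_single, norm_one]
  -- key: cross energy equals ν energy
  have hr := RotSymAux.radial_int hk ν hrot e he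
  set c : ℝ := ∫ y, ⟪e, y⟫ ^ k ∂ν with hc
  have key : (∫ x, ∫ y, ⟪x, y⟫ ^ k ∂ν ∂μ) = ∫ x, ∫ y, ⟪x, y⟫ ^ k ∂ν ∂ν := by
    simp_rw [hr]
    rw [integral_mul_const, integral_mul_const, hrade]
  -- sum expansions
  have Eμμ := RotSymAux.energy_eq_sum μ μ hmom hmom
  have Eμν := RotSymAux.energy_eq_sum μ ν hmom hmν
  have Eνν := RotSymAux.energy_eq_sum ν ν hmν hmν
  set a : (Fin k → Fin n) → ℝ := fun f => ∫ x, ∏ j, x (f j) ∂μ with ha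
  set b : (Fin k → Fin n) → ℝ := fun f => ∫ x, ∏ j, x (f j) ∂ν with hb
  have hsq : (0 : ℝ) ≤ ∑ f : Fin k → Fin n, (a f - b f) ^ 2 :=
    Finset.sum_nonneg fun f _ => sq_nonneg _
  have hexp : ∑ f : Fin k → Fin n, (a f - b f) ^ 2 =
      (∑ f : Fin k → Fin n, a f * a f) - 2 * (∑ f : Fin k → Fin n, a f * b f)
        + ∑ f : Fin k → Fin n, b f * b f := by
    rw [Finset.mul_sum, ← Finset.sum_sub_distrib, ← Finset.sum_add_distrib]
    exact Finset.sum_congr rfl fun f _ => by ring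
  rw [ge_iff_le, Eμμ, Eνν]
  linarith [hsq, hexp, Eμν, Eνν, key]
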